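/- Let X_1, …, X_n be Banach spaces, X = ∏_{i=1}^n X_i with norm ‖x‖ = max_i ‖x_i‖.aLet M be a finite family of maps F : X → X sharing a common fixed point x̃ ∈ X, each F having a Lipschitz matrix A_F ∈ ℝ^{n×n}, and let μ : M → [0,1] with ∑ μ(F) = 1. Suppose ρ(∑_{F∈M} μ(F) A_F) < 1. Let L ≥ 1 and let π be a probability weight function on pairs (F, D), where F ∈ M and D is a delay matrix with entries in {0,…,L}, satisfying ∑_D π(F, D) = μ(F) for each F ∈ M. Then there exist constants C > 0 and β > 0 such that for all k ≥ 1 and all initial conditions x^0 ∈ X_L, ∑_{w} (∏_{m=1}^k π(w_m)) ‖(w_k)_{D} ∘ ⋯ ∘ (w_1)_{D}(x^0) − x̃_L‖ ≤ C e^{−βk} ‖x^0 − x̃_L‖, where the sum is over words w = (w_1, …, w_k) of pairs (F, D), each (w_m)_D denotes the delayed version F_D of the corresponding pair, and x̃_L ∈ X_L is defined by (x̃_L)_{i,ℓ} = x̃_i for all i, ℓ. -/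

import Mathlib

open Matrix BigOperators Filter
open scoped ENNReal NNReal

/-- The spectral radius of a real square matrix: the maximum modulus of its
complex eigenvalues. -/
noncomputable def specRad {m : Type*} [Fintype m] [DecidableEq m]
    (A : Matrix m m ℝ) : ℝ :=
  (spectralRadius ℂ (A.map (algebraMap ℝ ℂ))).toReal

/-- The delayed version `F_D` of a map `F` on a product of Banach spaces, with delay
matrix `D` (entries in `{0,…,L}`): component `(i,0)` applies `F i` to the delayed
coordinates `x (j, D i j)`, and component `(i,ℓ+1)` stores `x (i,ℓ)`. -/
def delayedMap {n L : ℕ} {X : Fin n → Type*}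
    (F : (∀ i, X i) → ∀ i, X i) (D : Fin n → Fin n → Fin (L + 1)) :
    (∀ p : Fin n × Fin (L + 1), X p.1) → ∀ p : Fin n × Fin (L + 1), X p.1 :=
  fun x p =>
    if h : (p.2 : ℕ) = 0 then F (fun j => x (j, D p.1 j)) p.1
    else x (p.1, ⟨(p.2 : ℕ) - 1, by have := p.2.isLt; omega⟩)

/-- Ordered composition `F (w (k-1)) ∘ ⋯ ∘ F (w 0)` applied to `x0`
(i.e. `w_k ∘ ⋯ ∘ w_1 (x^0)` with 1-based indexing). -/
def wordComp {X : Type*} {k : ℕ} {ι : Type*} (F : ι → X → X)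
    (w : Fin k → ι) (x0 : X) : X :=
  (List.ofFn fun m => F (w m)).foldl (fun x f => f x) x0

lemma wordComp_snoc {X : Type*} {k : ℕ} {ι : Type*} (F : ι → X → X)
    (w : Fin k → ι) (a : ι) (x0 : X) :
    wordComp F (Fin.snoc w a) x0 = F a (wordComp F w x0) := by
  unfold wordComp
  rw [List.ofFn_succ']
  simp [Fin.snoc_castSucc, List.concat_eq_append]

lemma wordComp_zero {X : Type*} {ι : Type*} (F : ι → X → X)
    (w : Fin 0 → ι) (x0 : X) : wordComp F w x0 = x0 := by
  unfold wordComp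
  simp

lemma sum_snoc_reindex {α M : Type*} [Fintype α] [AddCommMonoid M] {k : ℕ}
    (g : (Fin (k+1) → α) → M) :
    ∑ w : Fin (k+1) → α, g w
      = ∑ a : α, ∑ w' : Fin k → α, g (Fin.snoc w' a) := by
  calc ∑ w : Fin (k+1) → α, g w
      = ∑ q : α × (Fin k → α), g (Fin.snocEquiv (fun _ => α) q) :=
        (Fintype.sum_equiv (Fin.snocEquiv (fun _ => α)) _ _ fun q => rfl).symm
    _ = ∑ a : α, ∑ w' : Fin k → α, g (Fin.snoc w' a) := by
        rw [Fintype.sum_prod_type]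
        simp [Fin.snocEquiv]

lemma pow_entry_nonneg {n : ℕ} {B : Matrix (Fin n) (Fin n) ℝ}
    (hB : ∀ i j, 0 ≤ B i j) (N : ℕ) : ∀ i j, 0 ≤ (B ^ N) i j := by
  induction N with
  | zero =>
    intro i j
    rw [pow_zero]
    by_cases h : i = j
    · subst h; simp [Matrix.one_apply_eq]
    · simp [Matrix.one_apply_ne h]
  | succ N ih =>
    intro i j
    rw [pow_succ, Matrix.mul_apply]
    exact Finset.sum_nonneg fun k _ => mul_nonneg (ih i k) (hB k j)

lemma exists_pow_root {b : ℝ} (hb0 : 0 < b) (hb1 : b < 1) {N : ℕ} (hN : N ≠ 0) :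
    ∃ g : ℝ, 0 < g ∧ g < 1 ∧ g ^ N = b := by
  refine ⟨b ^ ((N : ℝ)⁻¹), Real.rpow_pos_of_pos hb0 _,
    Real.rpow_lt_one hb0.le hb1 (by positivity), ?_⟩
  rw [← Real.rpow_natCast (b ^ ((N:ℝ)⁻¹)) N, ← Real.rpow_mul hb0.le,
    inv_mul_cancel₀ (by exact_mod_cast hN), Real.rpow_one]

lemma exists_contraction_vector {n : ℕ} (hn : 0 < n) (Ahat : Matrix (Fin n) (Fin n) ℝ)
    (hA : ∀ i j, 0 ≤ Ahat i j) (hρ : specRad Ahat < 1) :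
    ∃ b : ℝ, 0 < b ∧ b < 1 ∧ ∃ v : Fin n → ℝ, (∀ i, 1 ≤ v i) ∧
      ∀ i, ∑ j, Ahat i j * v j ≤ b * v i := by
  haveI : Nonempty (Fin n) := Fin.pos_iff_nonempty.mp hn
  letI := Matrix.linftyOpNormedRing (n := Fin n) (α := ℂ)
  letI := Matrix.linftyOpNormedAlgebra (R := ℂ) (n := Fin n) (α := ℂ)
  haveI : CompleteSpace (Matrix (Fin n) (Fin n) ℂ) :=
    FiniteDimensional.complete ℂ (Matrix (Fin n) (Fin n) ℂ)
  set B := Ahat.map (algebraMap ℝ ℂ) with hB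
  have hlt : spectralRadius ℂ B < 1 := by
    obtain ⟨z, hz, hzeq⟩ := spectrum.exists_nnnorm_eq_spectralRadius B
    rw [← hzeq]
    rw [show ((1:ℝ≥0∞)) = ((1:ℝ≥0):ℝ≥0∞) by simp, ENNReal.coe_lt_coe]
    have : (spectralRadius ℂ B).toReal < 1 := hρ
    rw [← hzeq, ENNReal.coe_toReal] at this
    exact_mod_cast this
  have hg := spectrum.pow_nnnorm_pow_one_div_tendsto_nhds_spectralRadius B
  obtain ⟨N, hN⟩ := ((hg.eventually_lt_const hlt).and (eventually_ge_atTop 1)).exists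
  have hN1 : 1 ≤ N := hN.2
  have hnorm : ‖B ^ N‖₊ < 1 := by
    by_contra hc
    push_neg at hc
    have : (1:ℝ≥0∞) ≤ (‖B ^ N‖₊ : ℝ≥0∞) ^ (1 / (N:ℝ)) :=
      ENNReal.one_le_rpow (by exact_mod_cast hc) (by positivity)
    exact absurd hN.1 (not_lt.mpr (le_trans (by simp) this))
  -- row sums of Ahat ^ N are bounded by a constant `c < 1`
  have hBN : B ^ N = (Ahat ^ N).map (algebraMap ℝ ℂ) := by
    rw [hB, ← RingHom.mapMatrix_apply, ← map_pow, RingHom.mapMatrix_apply]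
  set c : ℝ := max (‖B ^ N‖₊ : ℝ) (1/2) with hc
  have hc0 : 0 < c := lt_of_lt_of_le (by norm_num) (le_max_right _ _)
  have hc1 : c < 1 := max_lt (by exact_mod_cast hnorm) (by norm_num)
  have hrow : ∀ i, ∑ j, (Ahat ^ N) i j ≤ c := by
    intro i
    have h1 : (∑ j, ‖(B ^ N) i j‖₊) ≤ ‖B ^ N‖₊ := by
      rw [Matrix.linfty_opNNNorm_def]
      exact Finset.le_sup (f := fun i => ∑ j, ‖(B ^ N) i j‖₊) (Finset.mem_univ i)
    have h2 : (∑ j, ‖(B ^ N) i j‖₊ : ℝ≥0) = ∑ j, (Ahat ^ N) i j := by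
      push_cast
      refine Finset.sum_congr rfl fun j _ => ?_
      rw [hBN]
      simp only [Matrix.map_apply]
      rw [Complex.coe_algebraMap, Complex.norm_real,
        Real.norm_of_nonneg (pow_entry_nonneg hA N i j)]
    calc (∑ j, (Ahat ^ N) i j) = ((∑ j, ‖(B ^ N) i j‖₊ : ℝ≥0) : ℝ) := by rw [h2]
      _ ≤ (‖B ^ N‖₊ : ℝ) := by exact_mod_cast h1
      _ ≤ c := le_max_left _ _
  clear hg hN hlt hnorm hBN hB
  -- build the vector v
  obtain ⟨g, hg0, hg1, hgN⟩ := exists_pow_root hc0 hc1 (by omega : N ≠ 0)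
  set s : ℕ → Fin n → ℝ := fun r i => ∑ j, (Ahat ^ r) i j with hs
  have hs0 : ∀ r i, 0 ≤ s r i := fun r i =>
    Finset.sum_nonneg fun j _ => pow_entry_nonneg hA r i j
  set v : Fin n → ℝ := fun i => ∑ r ∈ Finset.range N, g⁻¹ ^ r * s r i with hv
  have hsN : ∀ i, s N i ≤ c := hrow
  have hs0' : ∀ i, s 0 i = 1 := by
    intro i
    simp [hs, Matrix.one_apply, Finset.sum_ite_eq']
  have hv1 : ∀ i, 1 ≤ v i := by
    intro i
    obtain ⟨m, rfl⟩ : ∃ m, N = m + 1 := ⟨N - 1, by omega⟩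
    rw [hv]
    simp only
    rw [Finset.sum_range_succ']
    have : (1:ℝ) = 0 + g⁻¹ ^ 0 * s 0 i := by simp [hs0' i]
    rw [this]
    gcongr
    exact Finset.sum_nonneg fun r _ =>
      mul_nonneg (pow_nonneg (inv_nonneg.mpr hg0.le) _) (hs0 _ _)
  refine ⟨g, hg0, hg1, v, hv1, ?_⟩
  intro i
  have step : ∑ j, Ahat i j * v j = ∑ r ∈ Finset.range N, g⁻¹ ^ r * s (r+1) i := by
    rw [hv]
    simp only
    calc ∑ x, Ahat i x * ∑ r ∈ Finset.range N, g⁻¹ ^ r * s r x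
        = ∑ r ∈ Finset.range N, g⁻¹ ^ r * ∑ x, Ahat i x * s r x := by
          simp_rw [Finset.mul_sum]
          rw [Finset.sum_comm]
          exact Finset.sum_congr rfl fun r _ => Finset.sum_congr rfl fun x _ => by ring
      _ = ∑ r ∈ Finset.range N, g⁻¹ ^ r * s (r+1) i := by
          refine Finset.sum_congr rfl fun r _ => ?_
          congr 1
          have : s (r+1) i = ∑ x, Ahat i x * s r x := by
            simp only [hs]
            rw [pow_succ']
            simp_rw [Matrix.mul_apply]
            rw [Finset.sum_comm]
            simp_rw [← Finset.mul_sum]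
          rw [this]
  have shift : ∑ r ∈ Finset.range N, g⁻¹ ^ r * s (r+1) i
      = g * ∑ r ∈ Finset.range N, g⁻¹ ^ (r+1) * s (r+1) i := by
    rw [Finset.mul_sum]
    refine Finset.sum_congr rfl fun r _ => ?_
    rw [pow_succ]
    field_simp
  have sum_succ : ∑ r ∈ Finset.range N, g⁻¹ ^ (r+1) * s (r+1) i
      = (∑ r ∈ Finset.range (N+1), g⁻¹ ^ r * s r i) - s 0 i := by
    rw [Finset.sum_range_succ', pow_zero]
    ring
  have hbound : g⁻¹ ^ N * s N i ≤ 1 := by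
    have h1 : g⁻¹ ^ N = c⁻¹ := by rw [inv_pow, hgN]
    rw [h1]
    calc c⁻¹ * s N i ≤ c⁻¹ * c :=
          mul_le_mul_of_nonneg_left (hsN i) (inv_nonneg.mpr hc0.le)
      _ = 1 := inv_mul_cancel₀ hc0.ne'
  calc ∑ j, Ahat i j * v j
      = g * ((∑ r ∈ Finset.range (N+1), g⁻¹ ^ r * s r i) - s 0 i) := by
        rw [step, shift, sum_succ]
    _ = g * ((v i + g⁻¹ ^ N * s N i) - 1) := by
        rw [Finset.sum_range_succ, hs0' i, hv]
    _ ≤ g * ((v i + 1) - 1) := by nlinarith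
    _ = g * v i := by ring

theorem stmt13 {n L : ℕ} (hL : 1 ≤ L) {X : Fin n → Type*}
    [∀ i, NormedAddCommGroup (X i)] [∀ i, NormedSpace ℝ (X i)]
    [∀ i, CompleteSpace (X i)]
    {ι : Type*} [Fintype ι]
    (F : ι → (∀ i, X i) → ∀ i, X i) (A : ι → Matrix (Fin n) (Fin n) ℝ)
    (hA : ∀ f i j, 0 ≤ A f i j)
    (hLip : ∀ f, ∀ x y : ∀ i, X i, ∀ i,
      ‖F f x i - F f y i‖ ≤ ∑ j, A f i j * ‖x j - y j‖)
    (xfix : ∀ i, X i) (hfix : ∀ f, F f xfix = xfix)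
    (μ : ι → ℝ) (hμ0 : ∀ f, 0 ≤ μ f) (hμ1 : ∑ f, μ f = 1)
    (hρ : specRad (∑ f, μ f • A f) < 1)
    (π : ι × (Fin n → Fin n → Fin (L + 1)) → ℝ)
    (hπ0 : ∀ fD, 0 ≤ π fD)
    (hπμ : ∀ f, ∑ D : Fin n → Fin n → Fin (L + 1), π (f, D) = μ f) :
    ∃ C > (0 : ℝ), ∃ β > (0 : ℝ), ∀ k : ℕ, 1 ≤ k →
      ∀ x0 : ∀ p : Fin n × Fin (L + 1), X p.1,
      ∑ w : Fin k → ι × (Fin n → Fin n → Fin (L + 1)),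
        (∏ m, π (w m)) *
          ‖wordComp (fun fD => delayedMap (F fD.1) fD.2) w x0 -
            (fun p : Fin n × Fin (L + 1) => xfix p.1)‖ ≤
        C * Real.exp (-β * k) *
          ‖x0 - fun p : Fin n × Fin (L + 1) => xfix p.1‖ := by
  classical
  rcases Nat.eq_zero_or_pos n with hn | hn
  · -- degenerate case n = 0 : everything is zero
    subst hn
    refine ⟨1, one_pos, 1, one_pos, fun k hk x0 => ?_⟩
    have hz : ∀ w : Fin k → ι × (Fin 0 → Fin 0 → Fin (L + 1)),
        ‖wordComp (fun fD => delayedMap (F fD.1) fD.2) w x0 -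
          (fun p : Fin 0 × Fin (L + 1) => xfix p.1)‖ = 0 := by
      intro w
      rw [norm_eq_zero]
      exact Subsingleton.elim _ _
    simp only [hz, mul_zero, Finset.sum_const_zero]
    positivity
  -- main case
  have hAhat_apply : ∀ i j, (∑ f, μ f • A f) i j = ∑ f, μ f * A f i j := by
    intro i j
    simp [Matrix.sum_apply]
  obtain ⟨b, hb0, hb1, v, hv1, hvA⟩ := exists_contraction_vector hn (∑ f, μ f • A f)
    (fun i j => by
      rw [hAhat_apply]
      exact Finset.sum_nonneg fun f _ => mul_nonneg (hμ0 f) (hA f i j)) hρ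
  obtain ⟨γ, hγ0, hγ1, hγL⟩ := exists_pow_root hb0 hb1 (Nat.succ_ne_zero L)
  have hγinv1 : 1 ≤ γ⁻¹ := by
    have := mul_inv_cancel₀ hγ0.ne'
    nlinarith [inv_pos.mpr hγ0]
  have hπsum : ∑ a : ι × (Fin n → Fin n → Fin (L + 1)), π a = 1 := by
    rw [Fintype.sum_prod_type]
    simp only [hπμ]
    exact hμ1
  refine ⟨(∑ p : Fin n × Fin (L+1), v p.1 * γ⁻¹ ^ L) + 1, ?_, -Real.log γ, ?_,
    fun k hk x0 => ?_⟩
  · have h0 : (0:ℝ) ≤ ∑ p : Fin n × Fin (L+1), v p.1 * γ⁻¹ ^ L :=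
      Finset.sum_nonneg fun p _ => mul_nonneg (le_trans zero_le_one (hv1 p.1))
        (pow_nonneg (inv_nonneg.mpr hγ0.le) _)
    linarith
  · have := Real.log_neg hγ0 hγ1
    linarith
  set Fd : ι × (Fin n → Fin n → Fin (L + 1)) →
      ((∀ p : Fin n × Fin (L + 1), X p.1) → ∀ p : Fin n × Fin (L + 1), X p.1) :=
    fun fD => delayedMap (F fD.1) fD.2 with hFd
  set xL : ∀ p : Fin n × Fin (L + 1), X p.1 := fun p => xfix p.1 with hxL
  set M := ‖x0 - xL‖ with hM
  have hM0 : (0:ℝ) ≤ M := norm_nonneg _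
  have hvpos : ∀ i, (0:ℝ) ≤ v i := fun i => le_trans zero_le_one (hv1 i)
  have key : ∀ k : ℕ, ∀ p : Fin n × Fin (L + 1),
      (∑ w : Fin k → ι × (Fin n → Fin n → Fin (L + 1)),
        (∏ m, π (w m)) * ‖wordComp Fd w x0 p - xfix p.1‖)
        ≤ v p.1 * γ ^ k * γ⁻¹ ^ (p.2 : ℕ) * M := by
    intro k
    induction k with
    | zero =>
      intro p
      rw [Fintype.sum_unique]
      have e1 : (∏ m : Fin 0,
          π ((default : Fin 0 → ι × (Fin n → Fin n → Fin (L + 1))) m)) = 1 := by simp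
      rw [e1, one_mul, wordComp_zero]
      have h1 : ‖x0 p - xfix p.1‖ ≤ M := by
        have h := norm_le_pi_norm (x0 - xL) p
        simpa [hxL] using h
      have h2 : (1:ℝ) ≤ v p.1 * γ ^ 0 * γ⁻¹ ^ (p.2 : ℕ) := by
        rw [pow_zero, mul_one]
        nlinarith [hv1 p.1, one_le_pow₀ (n := (p.2:ℕ)) hγinv1]
      calc ‖x0 p - xfix p.1‖ ≤ M := h1
        _ = 1 * M := (one_mul M).symm
        _ ≤ v p.1 * γ ^ 0 * γ⁻¹ ^ (p.2 : ℕ) * M := mul_le_mul_of_nonneg_right h2 hM0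
    | succ k ih =>
      intro p
      rw [sum_snoc_reindex]
      have hre : ∀ (a : ι × (Fin n → Fin n → Fin (L + 1)))
          (w' : Fin k → ι × (Fin n → Fin n → Fin (L + 1))),
          (∏ m, π ((Fin.snoc w' a : Fin (k+1) → ι × (Fin n → Fin n → Fin (L + 1))) m)) *
              ‖wordComp Fd (Fin.snoc w' a) x0 p - xfix p.1‖
            = π a * ((∏ m, π (w' m)) * ‖Fd a (wordComp Fd w' x0) p - xfix p.1‖) := by
        intro a w'
        rw [wordComp_snoc, Fin.prod_univ_castSucc]
        simp only [Fin.snoc_castSucc, Fin.snoc_last]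
        ring
      simp only [hre]
      by_cases hp2 : (p.2 : ℕ) = 0
      · -- the freshly updated component
        have hdel : ∀ (a : ι × (Fin n → Fin n → Fin (L + 1)))
            (y : ∀ q : Fin n × Fin (L+1), X q.1),
            Fd a y p = F a.1 (fun j => y (j, a.2 p.1 j)) p.1 := by
          intro a y
          simp only [hFd, delayedMap]
          rw [dif_pos hp2]
        have hS : ∀ (j : Fin n) (d : Fin (L+1)),
            (∑ w' : Fin k → ι × (Fin n → Fin n → Fin (L + 1)),
              (∏ m, π (w' m)) * ‖wordComp Fd w' x0 (j, d) - xfix j‖)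
              ≤ v j * γ ^ k * γ⁻¹ ^ L * M := by
          intro j d
          refine (ih (j, d)).trans ?_
          have h4 : γ⁻¹ ^ (d:ℕ) ≤ γ⁻¹ ^ L :=
            pow_le_pow_right₀ hγinv1 (Nat.lt_succ_iff.mp d.isLt)
          apply mul_le_mul_of_nonneg_right _ hM0
          exact mul_le_mul_of_nonneg_left h4
            (mul_nonneg (hvpos j) (pow_nonneg hγ0.le k))
        calc ∑ a : ι × (Fin n → Fin n → Fin (L + 1)),
              ∑ w' : Fin k → ι × (Fin n → Fin n → Fin (L + 1)),
              π a * ((∏ m, π (w' m)) * ‖Fd a (wordComp Fd w' x0) p - xfix p.1‖)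
            ≤ ∑ a : ι × (Fin n → Fin n → Fin (L + 1)),
              ∑ w' : Fin k → ι × (Fin n → Fin n → Fin (L + 1)),
              π a * ((∏ m, π (w' m)) *
                ∑ j, A a.1 p.1 j * ‖wordComp Fd w' x0 (j, a.2 p.1 j) - xfix j‖) := by
              refine Finset.sum_le_sum fun a _ => Finset.sum_le_sum fun w' _ => ?_
              refine mul_le_mul_of_nonneg_left (mul_le_mul_of_nonneg_left ?_
                (Finset.prod_nonneg fun m _ => hπ0 _)) (hπ0 a)
              rw [hdel a _]
              have h2 := hLip a.1 (fun j => wordComp Fd w' x0 (j, a.2 p.1 j)) xfix p.1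
              have h3 : F a.1 xfix p.1 = xfix p.1 := congrFun (hfix a.1) p.1
              rw [h3] at h2
              exact h2
          _ = ∑ a : ι × (Fin n → Fin n → Fin (L + 1)), π a * ∑ j, A a.1 p.1 j *
                ∑ w' : Fin k → ι × (Fin n → Fin n → Fin (L + 1)),
                (∏ m, π (w' m)) * ‖wordComp Fd w' x0 (j, a.2 p.1 j) - xfix j‖ := by
              refine Finset.sum_congr rfl fun a _ => ?_
              calc ∑ w' : Fin k → ι × (Fin n → Fin n → Fin (L + 1)),
                    π a * ((∏ m, π (w' m)) *
                      ∑ j, A a.1 p.1 j * ‖wordComp Fd w' x0 (j, a.2 p.1 j) - xfix j‖)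
                  = ∑ w' : Fin k → ι × (Fin n → Fin n → Fin (L + 1)), ∑ j,
                      π a * ((∏ m, π (w' m)) *
                        (A a.1 p.1 j * ‖wordComp Fd w' x0 (j, a.2 p.1 j) - xfix j‖)) := by
                    simp_rw [Finset.mul_sum]
                _ = ∑ j, ∑ w' : Fin k → ι × (Fin n → Fin n → Fin (L + 1)),
                      π a * ((∏ m, π (w' m)) *
                        (A a.1 p.1 j * ‖wordComp Fd w' x0 (j, a.2 p.1 j) - xfix j‖)) :=
                    Finset.sum_comm
                _ = π a * ∑ j, A a.1 p.1 j *
                      ∑ w' : Fin k → ι × (Fin n → Fin n → Fin (L + 1)),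
                      (∏ m, π (w' m)) * ‖wordComp Fd w' x0 (j, a.2 p.1 j) - xfix j‖ := by
                    rw [Finset.mul_sum]
                    refine Finset.sum_congr rfl fun j _ => ?_
                    rw [Finset.mul_sum, Finset.mul_sum]
                    exact Finset.sum_congr rfl fun w' _ => by ring
          _ ≤ ∑ a : ι × (Fin n → Fin n → Fin (L + 1)), π a * ∑ j, A a.1 p.1 j *
                (v j * γ ^ k * γ⁻¹ ^ L * M) := by
              refine Finset.sum_le_sum fun a _ => mul_le_mul_of_nonneg_left
                (Finset.sum_le_sum fun j _ => mul_le_mul_of_nonneg_left (hS j _)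
                  (hA a.1 p.1 j)) (hπ0 a)
          _ = (∑ j, (∑ f, μ f * A f p.1 j) * v j) * (γ ^ k * γ⁻¹ ^ L * M) := by
              rw [Fintype.sum_prod_type]
              calc ∑ f, ∑ D : Fin n → Fin n → Fin (L + 1),
                    π (f, D) * ∑ j, A f p.1 j * (v j * γ ^ k * γ⁻¹ ^ L * M)
                  = ∑ f, μ f * ∑ j, A f p.1 j * (v j * γ ^ k * γ⁻¹ ^ L * M) := by
                    refine Finset.sum_congr rfl fun f _ => ?_
                    rw [← Finset.sum_mul, hπμ f]
                _ = (∑ j, (∑ f, μ f * A f p.1 j) * v j) * (γ ^ k * γ⁻¹ ^ L * M) := by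
                    simp_rw [Finset.mul_sum, Finset.sum_mul]
                    rw [Finset.sum_comm]
                    exact Finset.sum_congr rfl fun j _ =>
                      Finset.sum_congr rfl fun f _ => by ring
          _ ≤ (b * v p.1) * (γ ^ k * γ⁻¹ ^ L * M) := by
              apply mul_le_mul_of_nonneg_right _ (by positivity)
              simp only [← hAhat_apply]
              exact hvA p.1
          _ = v p.1 * γ ^ (k+1) * γ⁻¹ ^ ((p.2:ℕ)) * M := by
              rw [hp2, pow_zero, ← hγL]
              have hγne : γ ≠ 0 := hγ0.ne'
              field_simp
              have h5 : γ ^ L.succ * γ⁻¹ ^ L = γ := by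
                rw [pow_succ, inv_pow, mul_comm (γ ^ L) γ, mul_assoc,
                  mul_inv_cancel₀ (pow_ne_zero _ hγne), mul_one]
              linear_combination (γ ^ k * v p.1 * M) * h5
      · -- a shifted component
        have hple := p.2.isLt
        have hdel : ∀ (a : ι × (Fin n → Fin n → Fin (L + 1)))
            (y : ∀ q : Fin n × Fin (L+1), X q.1),
            Fd a y p = y (p.1, ⟨(p.2:ℕ) - 1, by omega⟩) := by
          intro a y
          simp only [hFd, delayedMap]
          rw [dif_neg hp2]
        set q : Fin n × Fin (L+1) := (p.1, ⟨(p.2:ℕ) - 1, by omega⟩) with hq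
        calc ∑ a : ι × (Fin n → Fin n → Fin (L + 1)),
              ∑ w' : Fin k → ι × (Fin n → Fin n → Fin (L + 1)),
              π a * ((∏ m, π (w' m)) * ‖Fd a (wordComp Fd w' x0) p - xfix p.1‖)
            = ∑ a : ι × (Fin n → Fin n → Fin (L + 1)), π a *
                ∑ w' : Fin k → ι × (Fin n → Fin n → Fin (L + 1)),
                (∏ m, π (w' m)) * ‖wordComp Fd w' x0 q - xfix q.1‖ := by
              refine Finset.sum_congr rfl fun a _ => ?_
              rw [Finset.mul_sum]
              refine Finset.sum_congr rfl fun w' _ => ?_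
              rw [hdel a _]
          _ = (∑ a : ι × (Fin n → Fin n → Fin (L + 1)), π a) *
                ∑ w' : Fin k → ι × (Fin n → Fin n → Fin (L + 1)),
                (∏ m, π (w' m)) * ‖wordComp Fd w' x0 q - xfix q.1‖ :=
              (Finset.sum_mul _ _ _).symm
          _ = ∑ w' : Fin k → ι × (Fin n → Fin n → Fin (L + 1)),
                (∏ m, π (w' m)) * ‖wordComp Fd w' x0 q - xfix q.1‖ := by
              rw [hπsum, one_mul]
          _ ≤ v q.1 * γ ^ k * γ⁻¹ ^ ((q.2:ℕ)) * M := ih q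
          _ ≤ v p.1 * γ ^ (k+1) * γ⁻¹ ^ ((p.2:ℕ)) * M := by
              obtain ⟨m, hm⟩ : ∃ m, (p.2:ℕ) = m + 1 := ⟨(p.2:ℕ) - 1, by omega⟩
              apply le_of_eq
              have hq1 : q.1 = p.1 := rfl
              have hq2 : (q.2:ℕ) = m := by simp [hq, hm]
              rw [hq1, hq2, hm]
              have hγne : γ ≠ 0 := hγ0.ne'
              field_simp
              linear_combination (-(v p.1 * γ ^ k * γ⁻¹ ^ m * M)) * (mul_inv_cancel₀ hγne)
  -- final assembly
  have hnormle : ∀ z : (∀ p : Fin n × Fin (L+1), X p.1), ‖z‖ ≤ ∑ p, ‖z p‖ := fun z =>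
    (pi_norm_le_iff_of_nonneg (Finset.sum_nonneg fun q _ => norm_nonneg _)).mpr
      fun p => Finset.single_le_sum (fun q _ => norm_nonneg (z q)) (Finset.mem_univ p)
  have hexp : Real.exp (-(-Real.log γ) * (k:ℕ)) = γ ^ k := by
    rw [neg_neg, mul_comm, Real.exp_nat_mul, Real.exp_log hγ0]
  calc ∑ w : Fin k → ι × (Fin n → Fin n → Fin (L + 1)),
        (∏ m, π (w m)) * ‖wordComp Fd w x0 - xL‖
      ≤ ∑ w : Fin k → ι × (Fin n → Fin n → Fin (L + 1)),
        (∏ m, π (w m)) * ∑ p : Fin n × Fin (L+1), ‖wordComp Fd w x0 p - xfix p.1‖ := by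
        refine Finset.sum_le_sum fun w _ => mul_le_mul_of_nonneg_left ?_
          (Finset.prod_nonneg fun m _ => hπ0 _)
        refine (hnormle _).trans_eq ?_
        exact Finset.sum_congr rfl fun p _ => by simp [hxL]
    _ = ∑ p : Fin n × Fin (L+1), ∑ w : Fin k → ι × (Fin n → Fin n → Fin (L + 1)),
          (∏ m, π (w m)) * ‖wordComp Fd w x0 p - xfix p.1‖ := by
        simp_rw [Finset.mul_sum]
        rw [Finset.sum_comm]
    _ ≤ ∑ p : Fin n × Fin (L+1), v p.1 * γ ^ k * γ⁻¹ ^ L * M := by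
        refine Finset.sum_le_sum fun p _ => (key k p).trans ?_
        have h4 : γ⁻¹ ^ ((p.2:ℕ)) ≤ γ⁻¹ ^ L :=
          pow_le_pow_right₀ hγinv1 (Nat.lt_succ_iff.mp p.2.isLt)
        apply mul_le_mul_of_nonneg_right _ hM0
        exact mul_le_mul_of_nonneg_left h4
          (mul_nonneg (hvpos p.1) (pow_nonneg hγ0.le k))
    _ = (∑ p : Fin n × Fin (L+1), v p.1 * γ⁻¹ ^ L) * γ ^ k * M := by
        rw [Finset.sum_mul, Finset.sum_mul]
        exact Finset.sum_congr rfl fun p _ => by ring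
    _ ≤ ((∑ p : Fin n × Fin (L+1), v p.1 * γ⁻¹ ^ L) + 1) * γ ^ k * M := by
        apply mul_le_mul_of_nonneg_right _ hM0
        apply mul_le_mul_of_nonneg_right _ (pow_nonneg hγ0.le k)
        linarith
    _ = ((∑ p : Fin n × Fin (L+1), v p.1 * γ⁻¹ ^ L) + 1) *
          Real.exp (-(-Real.log γ) * (k:ℕ)) * M := by rw [hexp]
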